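/- Let p_n denote the number of words of length n over the alphabet {a, a⁻¹, b, b⁻¹} whose product in the free group F(a,b) is the identity and none of whose proper prefixes has product lying in the coset b⁻¹⟨a⟩, where ⟨a⟩ is the cyclic subgroup generated by a. Then the formal power series P(z) = Σ_{n≥0} p_n z^n ∈ ℚ[[z]] satisfies the quadratic equation 3z²·P² − P + 1 = 0; equivalently, P(z) = (1 − √(1 − 12z²))/(6z²). -/

import Mathlib

noncomputable section

/-- The evaluation of a letter from the alphabet `{a, a⁻¹, b, b⁻¹}` in the free
group `F(a,b)` on two generators. -/
def freeLetterVal (p : Fin 2 × Bool) : FreeGroup (Fin 2) :=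
  if p.2 then FreeGroup.of p.1 else (FreeGroup.of p.1)⁻¹

/-- `p_n`: the number of words of length `n` over `{a, a⁻¹, b, b⁻¹}` whose product in
the free group `F(a,b)` is the identity and none of whose nonempty prefixes has
product lying in the coset `b⁻¹⟨a⟩`. -/
def pCount (n : ℕ) : ℕ :=
  Nat.card {w : Fin n → Fin 2 × Bool //
    ((List.ofFn w).map freeLetterVal).prod = 1 ∧
    ∀ m, 0 < m → m ≤ n → ¬ ∃ j : ℤ,
      (((List.ofFn w).take m).map freeLetterVal).prod =
        (FreeGroup.of (1 : Fin 2))⁻¹ * FreeGroup.of (0 : Fin 2) ^ j}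

namespace FGAux

abbrev S := Fin 2 × Bool

def inv' (s : S) : S := (s.1, !s.2)

@[simp] lemma inv'_inv' (s : S) : inv' (inv' s) = s := by cases s; simp [inv']

lemma val_inv' (s : S) : freeLetterVal (inv' s) = (freeLetterVal s)⁻¹ := by
  obtain ⟨i, b⟩ := s; cases b <;> simp [inv', freeLetterVal]

def prodv (l : List S) : FreeGroup (Fin 2) := (l.map freeLetterVal).prod

@[simp] lemma prodv_nil : prodv [] = 1 := rfl

@[simp] lemma prodv_cons (s : S) (l : List S) :
    prodv (s :: l) = freeLetterVal s * prodv l := by simp [prodv]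

@[simp] lemma prodv_append (l₁ l₂ : List S) :
    prodv (l₁ ++ l₂) = prodv l₁ * prodv l₂ := by simp [prodv]

def Red (l : List S) : Prop := List.Chain' (fun p q => q ≠ inv' p) l

def push (x : S) : List S → List S
  | [] => [x]
  | y :: t => if y = inv' x then t else x :: y :: t

lemma red_push (x : S) (l : List S) (h : Red l) : Red (push x l) := by
  cases l with
  | nil => simp [push, Red, List.Chain']
  | cons y t =>
      by_cases hy : y = inv' x
      · simpa [push, hy, Red, List.Chain'] using (List.isChain_cons.mp h).2
      · show List.Chain' _ (if y = inv' x then t else x :: y :: t)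
        rw [if_neg hy]
        exact List.isChain_cons_cons.mpr ⟨hy, h⟩

lemma push_push (x : S) (l : List S) (h : Red l) :
    push (inv' x) (push x l) = l := by
  cases l with
  | nil => simp [push]
  | cons y t =>
      by_cases hy : y = inv' x
      · subst hy
        cases t with
        | nil => simp [push]
        | cons z t' =>
            have hz : ¬ (z = x) := by
              have := (List.isChain_cons_cons.mp h).1; simpa using this
            simp [push, hz]
      · simp [push, hy]

def R : Type := {l : List S // Red l}

def pushPerm (x : S) : Equiv.Perm R where
  toFun r := ⟨push x r.1, red_push x r.1 r.2⟩
  invFun r := ⟨push (inv' x) r.1, red_push _ r.1 r.2⟩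
  left_inv r := Subtype.ext (push_push x r.1 r.2)
  right_inv r := Subtype.ext (by
    have := push_push (inv' x) r.1 r.2; simpa using this)

lemma pushPerm_symm (x : S) : (pushPerm x).symm = pushPerm (inv' x) := by
  ext r; rfl

def Phi : FreeGroup (Fin 2) →* Equiv.Perm R :=
  FreeGroup.lift fun i => pushPerm (i, true)

lemma Phi_of (i : Fin 2) : Phi (FreeGroup.of i) = pushPerm (i, true) :=
  FreeGroup.lift_apply_of

lemma Phi_val (s : S) : Phi (freeLetterVal s) = pushPerm s := by
  obtain ⟨i, b⟩ := s
  cases b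
  · have h1 : Phi ((FreeGroup.of i)⁻¹) = (pushPerm (i, true))⁻¹ := by
      rw [map_inv, Phi_of]
    simp only [freeLetterVal, Bool.false_eq_true, if_false]
    rw [h1]
    have h2 : (pushPerm (i, true))⁻¹ = (pushPerm (i, true)).symm := rfl
    rw [h2, pushPerm_symm]; rfl
  · simp only [freeLetterVal, if_pos]
    exact Phi_of i

lemma prodv_push (x : S) (l : List S) :
    prodv (push x l) = freeLetterVal x * prodv l := by
  cases l with
  | nil => simp [push]
  | cons y t =>
      by_cases hy : y = inv' x
      · subst hy; simp [push, val_inv', mul_assoc]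
      · simp [push, hy]

lemma Phi_letter_prodv (s : S) (r : R) :
    prodv ((Phi (freeLetterVal s)) r).1 = freeLetterVal s * prodv r.1 := by
  rw [Phi_val]
  exact prodv_push s r.1

lemma Phi_prodv (g : FreeGroup (Fin 2)) : ∀ r : R, prodv ((Phi g) r).1 = g * prodv r.1 := by
  induction g using FreeGroup.induction_on with
  | C1 => intro r; simp
  | of x => intro r
            have h : (FreeGroup.of x : FreeGroup (Fin 2)) = freeLetterVal (x, true) := by
              simp [freeLetterVal]
            rw [h]; exact Phi_letter_prodv (x, true) r
  | inv_of x _ =>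
              intro r
              have h : (FreeGroup.of x : FreeGroup (Fin 2))⁻¹ = freeLetterVal (x, false) := by
                simp [freeLetterVal]
              rw [h]; exact Phi_letter_prodv (x, false) r
  | mul g h hg hh =>
                    intro r
                    rw [map_mul]
                    have h2 : (Phi g * Phi h) r = (Phi g) ((Phi h) r) := rfl
                    rw [h2, hg, hh, mul_assoc]

def nilR : R := ⟨[], List.isChain_nil⟩

def st (g : FreeGroup (Fin 2)) : List S := ((Phi g⁻¹) nilR).1

@[simp] lemma st_one : st 1 = [] := by simp [st, nilR]; rfl

lemma prodv_st (g : FreeGroup (Fin 2)) : prodv (st g) = g⁻¹ := by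
  have := Phi_prodv g⁻¹ nilR; simpa [st, nilR] using this

lemma st_injective : Function.Injective st := by
  intro g h hgh
  have := congrArg prodv hgh
  rw [prodv_st, prodv_st] at this
  exact inv_injective this

lemma st_mul_val (g : FreeGroup (Fin 2)) (s : S) :
    st (g * freeLetterVal s) = push (inv' s) (st g) := by
  have h1 : (g * freeLetterVal s)⁻¹ = freeLetterVal (inv' s) * g⁻¹ := by
    rw [val_inv']; group
  simp only [st, h1, map_mul]
  have : (Phi (freeLetterVal (inv' s)) * Phi g⁻¹) nilR
      = (Phi (freeLetterVal (inv' s))) ((Phi g⁻¹) nilR) := rfl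
  rw [this, Phi_val]
  rfl

lemma st_val (s : S) : st (freeLetterVal s) = [inv' s] := by
  have := st_mul_val 1 s; simpa [push] using this

lemma st_val_inv (s : S) : st ((freeLetterVal s)⁻¹) = [s] := by
  have := st_val (inv' s); rwa [val_inv', inv'_inv'] at this

end FGAux
namespace FGAux

lemma Phi_of_apply (i : Fin 2) (r : R) :
    ((Phi (FreeGroup.of i)) r).1 = push (i, true) r.1 := by
  rw [Phi_of]; rfl

lemma Phi_of_inv_apply (i : Fin 2) (r : R) :
    ((Phi ((FreeGroup.of i)⁻¹)) r).1 = push (i, false) r.1 := by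
  have : (FreeGroup.of i)⁻¹ = freeLetterVal (i, false) := by simp [freeLetterVal]
  rw [this, Phi_val]; rfl

lemma push_of_head_ne (x : S) (l : List S) (h : ∀ p ∈ l.head?, p ≠ inv' x) :
    push x l = x :: l := by
  cases l with
  | nil => rfl
  | cons y t =>
      have : y ≠ inv' x := h y rfl
      simp [push, this]

lemma Phi_pow_pos (k : ℕ) (r : R) (h : ∀ p ∈ r.1.head?, p ≠ ((0 : Fin 2), false)) :
    ((Phi (FreeGroup.of 0 ^ k)) r).1 = List.replicate k ((0 : Fin 2), true) ++ r.1 := by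
  induction k generalizing r with
  | zero => simp
  | succ k ih =>
      rw [pow_succ, map_mul]
      have h1 : ((Phi (FreeGroup.of 0)) r).1 = ((0 : Fin 2), true) :: r.1 := by
        rw [Phi_of_apply]
        exact push_of_head_ne _ _ (by simpa [inv'] using h)
      have h2 : (Phi (FreeGroup.of 0 ^ k) * Phi (FreeGroup.of 0)) r
          = (Phi (FreeGroup.of 0 ^ k)) ((Phi (FreeGroup.of 0)) r) := rfl
      rw [h2, ih _ (by rw [h1]; intro p hp; simp at hp; rw [← hp]; decide)]
      rw [h1, List.replicate_succ']
      simp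

lemma Phi_pow_neg (k : ℕ) (r : R) (h : ∀ p ∈ r.1.head?, p ≠ ((0 : Fin 2), true)) :
    ((Phi (((FreeGroup.of 0)⁻¹) ^ k)) r).1 = List.replicate k ((0 : Fin 2), false) ++ r.1 := by
  induction k generalizing r with
  | zero => simp
  | succ k ih =>
      rw [pow_succ, map_mul]
      have h1 : ((Phi ((FreeGroup.of 0)⁻¹)) r).1 = ((0 : Fin 2), false) :: r.1 := by
        rw [Phi_of_inv_apply]
        exact push_of_head_ne _ _ (by simpa [inv'] using h)
      have h2 : (Phi (((FreeGroup.of 0)⁻¹) ^ k) * Phi ((FreeGroup.of 0)⁻¹)) r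
          = (Phi (((FreeGroup.of 0)⁻¹) ^ k)) ((Phi ((FreeGroup.of 0)⁻¹)) r) := rfl
      rw [h2, ih _ (by rw [h1]; intro p hp; simp at hp; rw [← hp]; decide)]
      rw [h1, List.replicate_succ']
      simp

lemma Phi_zpow (j : ℤ) (r : R) (h : ∀ p ∈ r.1.head?, p.1 ≠ (0 : Fin 2)) :
    ∃ L : List S, (∀ p ∈ L, p.1 = (0 : Fin 2)) ∧
      ((Phi (FreeGroup.of 0 ^ j)) r).1 = L ++ r.1 := by
  cases j with
  | ofNat k =>
      refine ⟨List.replicate k ((0 : Fin 2), true), ?_, ?_⟩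
      · intro p hp; rw [List.eq_of_mem_replicate hp]
      · rw [Int.ofNat_eq_coe, zpow_natCast]
        exact Phi_pow_pos k r (by intro p hp hc; exact h p hp (by rw [hc]))
  | negSucc k =>
      refine ⟨List.replicate (k + 1) ((0 : Fin 2), false), ?_, ?_⟩
      · intro p hp; rw [List.eq_of_mem_replicate hp]
      · rw [zpow_negSucc, ← inv_pow]
        exact Phi_pow_neg (k + 1) r (by intro p hp hc; exact h p hp (by rw [hc]))

lemma st_coset (j : ℤ) :
    ∃ L : List S, (∀ p ∈ L, p.1 = (0 : Fin 2)) ∧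
      st ((FreeGroup.of (1 : Fin 2))⁻¹ * FreeGroup.of (0 : Fin 2) ^ j)
        = L ++ [((1 : Fin 2), true)] := by
  have hinv : ((FreeGroup.of (1 : Fin 2))⁻¹ * FreeGroup.of (0 : Fin 2) ^ j)⁻¹
      = FreeGroup.of (0 : Fin 2) ^ (-j) * FreeGroup.of (1 : Fin 2) := by
    rw [mul_inv_rev, inv_inv, ← zpow_neg]
  set r1 : R := (Phi (FreeGroup.of (1 : Fin 2))) nilR with hr1
  have hr1v : r1.1 = [((1 : Fin 2), true)] := by
    rw [hr1, Phi_of_apply]; rfl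
  obtain ⟨L, hL, hst⟩ := Phi_zpow (-j) r1 (by rw [hr1v]; intro p hp; simp at hp; rw [← hp]; decide)
  refine ⟨L, hL, ?_⟩
  show ((Phi _) nilR).1 = _
  rw [hinv, map_mul]
  have h2 : (Phi (FreeGroup.of (0:Fin 2) ^ (-j)) * Phi (FreeGroup.of (1:Fin 2))) nilR
      = (Phi (FreeGroup.of (0:Fin 2) ^ (-j))) r1 := rfl
  rw [h2, hst, hr1v]

lemma st_xcoset (x : S) (hx : x ≠ ((1 : Fin 2), false)) (j : ℤ) :
    ∃ L : List S, (∀ p ∈ L, p.1 = (0 : Fin 2)) ∧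
      st ((freeLetterVal x)⁻¹ * ((FreeGroup.of (1 : Fin 2))⁻¹ * FreeGroup.of (0 : Fin 2) ^ j))
        = L ++ [((1 : Fin 2), true), x] := by
  have hinv : ((freeLetterVal x)⁻¹ * ((FreeGroup.of (1 : Fin 2))⁻¹ * FreeGroup.of (0 : Fin 2) ^ j))⁻¹
      = FreeGroup.of (0 : Fin 2) ^ (-j) * (FreeGroup.of (1 : Fin 2) * freeLetterVal x) := by
    rw [mul_inv_rev, mul_inv_rev, inv_inv, inv_inv, ← zpow_neg, mul_assoc]
  set r1 : R := (Phi (freeLetterVal x)) nilR with hr1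
  have hr1v : r1.1 = [x] := by rw [hr1, Phi_val]; rfl
  set r2 : R := (Phi (FreeGroup.of (1 : Fin 2))) r1 with hr2
  have hr2v : r2.1 = [((1 : Fin 2), true), x] := by
    rw [hr2, Phi_of_apply, hr1v]
    refine push_of_head_ne _ _ ?_
    intro p hp
    simp only [List.head?_cons, Option.mem_def, Option.some.injEq] at hp
    subst hp
    simpa [inv'] using hx
  obtain ⟨L, hL, hst⟩ := Phi_zpow (-j) r2 (by rw [hr2v]; intro p hp; simp at hp; rw [← hp]; decide)
  refine ⟨L, hL, ?_⟩
  show ((Phi _) nilR).1 = _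
  rw [hinv, map_mul, map_mul]
  have h2 : (Phi (FreeGroup.of (0:Fin 2) ^ (-j)) *
      (Phi (FreeGroup.of (1:Fin 2)) * Phi (freeLetterVal x))) nilR
      = (Phi (FreeGroup.of (0:Fin 2) ^ (-j))) r2 := rfl
  rw [h2, hst, hr2v]

lemma st_eq_nil_iff (g : FreeGroup (Fin 2)) : st g = [] ↔ g = 1 := by
  constructor
  · intro h; exact st_injective (by rw [h, st_one])
  · intro h; rw [h, st_one]

lemma letter_ne_one (s : S) : freeLetterVal s ≠ 1 := by
  intro h
  have := congrArg st h
  rw [st_val, st_one] at this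
  exact List.cons_ne_nil _ _ this

lemma one_ne_coset (j : ℤ) :
    (1 : FreeGroup (Fin 2)) ≠ (FreeGroup.of (1 : Fin 2))⁻¹ * FreeGroup.of (0 : Fin 2) ^ j := by
  intro h
  obtain ⟨L, _, hst⟩ := st_coset j
  have := congrArg st h
  rw [st_one, hst] at this
  exact (List.append_ne_nil_of_right_ne_nil _ (List.cons_ne_nil _ _)) this.symm

lemma letter_coset {s : S} {j : ℤ}
    (h : freeLetterVal s = (FreeGroup.of (1 : Fin 2))⁻¹ * FreeGroup.of (0 : Fin 2) ^ j) :
    s = ((1 : Fin 2), false) := by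
  obtain ⟨L, _, hst⟩ := st_coset j
  have h2 : [inv' s] = L ++ [((1 : Fin 2), true)] := by
    rw [← st_val s, h, hst]
  have hL : L = [] := by
    have h3 := congrArg List.length h2
    simp at h3
    exact h3
  rw [hL, List.nil_append] at h2
  have : inv' s = ((1 : Fin 2), true) := by injection h2
  have := congrArg inv' this
  rw [inv'_inv'] at this
  simpa [inv'] using this

end FGAux
namespace FGAux

lemma take_succ_eq (l : List S) (m : ℕ) (hm : m < l.length) :
    l.take (m + 1) = l.take m ++ [l[m]] := by
  rw [List.take_succ, List.getElem?_eq_getElem hm]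
  rfl

lemma st_prefix_succ (l : List S) (m : ℕ) (hm : m < l.length) :
    st (prodv (l.take (m + 1))) = push (inv' l[m]) (st (prodv (l.take m))) := by
  rw [take_succ_eq l m hm, prodv_append]
  have : prodv [l[m]] = freeLetterVal l[m] := by simp
  rw [this, st_mul_val]

lemma getLast?_push (z : S) (s : List S) (h : s ≠ []) (h2 : push z s ≠ []) :
    (push z s).getLast? = s.getLast? := by
  cases s with
  | nil => exact absurd rfl h
  | cons y t =>
      by_cases hy : y = inv' z
      · simp only [push, if_pos hy] at h2 ⊢
        cases t with
        | nil => exact absurd rfl h2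
        | cons a u => simp [List.getLast?_cons_cons]
      · simp only [push, if_neg hy]
        exact List.getLast?_cons_cons ..

lemma push_eq_nil {z : S} {s : List S} (h : push z s = []) : s = [inv' z] := by
  cases s with
  | nil => simp [push] at h
  | cons y t =>
      by_cases hy : y = inv' z
      · simp only [push, if_pos hy] at h
        rw [hy, h]
      · simp [push, hy] at h

lemma hit (l : List S) (c : S) :
    ∀ m, m ≤ l.length → (st (prodv (l.take m))).getLast? = some c →
      ∃ t, t ≤ m ∧ st (prodv (l.take t)) = [c] := by
  intro m
  induction m with
  | zero => intro _ hc; simp at hc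
  | succ m ih =>
      intro hm hc
      have hm' : m < l.length := hm
      rw [st_prefix_succ l m hm'] at hc
      cases hs : st (prodv (l.take m)) with
      | nil =>
          rw [hs] at hc
          simp only [push, List.getLast?_singleton, Option.some.injEq] at hc
          refine ⟨m + 1, le_rfl, ?_⟩
          rw [st_prefix_succ l m hm', hs]
          simp [push, hc]
      | cons y t =>
          rw [hs] at hc
          by_cases hy : y = inv' (inv' l[m])
          · simp only [push, if_pos hy] at hc
            cases t with
            | nil => simp at hc
            | cons a u =>
                obtain ⟨t', ht', h'⟩ := ih (le_of_lt hm') (by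
                  rw [hs, List.getLast?_cons_cons]; exact hc)
                exact ⟨t', le_trans ht' (Nat.le_succ m), h'⟩
          · simp only [push, if_neg hy] at hc
            rw [List.getLast?_cons_cons] at hc
            obtain ⟨t', ht', h'⟩ := ih (le_of_lt hm') (by rw [hs]; exact hc)
            exact ⟨t', le_trans ht' (Nat.le_succ m), h'⟩

lemma firstReturn_struct (l : List S) (M : ℕ) (hM : M ≤ l.length) (h1 : 0 < M)
    (hne : ∀ t, 0 < t → t < M → prodv (l.take t) ≠ 1)
    (hM1 : prodv (l.take M) = 1) :
    2 ≤ M ∧ ∀ (hi : M - 1 < l.length) (h0 : 0 < l.length), l[M - 1] = inv' l[0] := by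
  have h0len : 0 < l.length := lt_of_lt_of_le h1 hM
  have st1 : st (prodv (l.take 1)) = [inv' (l[0]'h0len)] := by
    rw [show (1 : ℕ) = 0 + 1 from rfl, st_prefix_succ l 0 h0len]
    simp [push]
  have hM2 : 2 ≤ M := by
    rcases Nat.lt_or_ge M 2 with h | h
    · interval_cases M
      exfalso
      have := congrArg st (hM1 : prodv (l.take 1) = 1)
      rw [st1, st_one] at this
      exact List.cons_ne_nil _ _ this
    · exact h
  refine ⟨hM2, ?_⟩
  intro hi h0
  -- stability of getLast? on [1, M-1]
  have key : ∀ t, 1 ≤ t → t ≤ M - 1 → (st (prodv (l.take t))).getLast? = some (inv' l[0]) := by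
    intro t
    induction t with
    | zero => intro h; omega
    | succ t iht =>
        intro _ hle
        rcases Nat.eq_or_lt_of_le (show 1 ≤ t + 1 by omega) with h | h
        · rw [← h, st1]
          rfl
        · have ht1 : 1 ≤ t := by omega
          have htM : t ≤ M - 1 := by omega
          have prev := iht ht1 htM
          have htlen : t < l.length := by omega
          rw [st_prefix_succ l t htlen]
          have hsne : st (prodv (l.take t)) ≠ [] := by
            intro hnil
            exact hne t ht1 (by omega) ((st_eq_nil_iff _).mp hnil)
          have hsne' : push (inv' l[t]) (st (prodv (l.take t))) ≠ [] := by
            intro hnil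
            have : prodv (l.take (t + 1)) = 1 := by
              apply (st_eq_nil_iff _).mp
              rw [st_prefix_succ l t htlen, hnil]
            exact hne (t + 1) (by omega) (by omega) this
          rw [getLast?_push _ _ hsne hsne']
          exact prev
  -- final step
  have hstep : st (prodv (l.take M)) = push (inv' l[M-1]) (st (prodv (l.take (M-1)))) := by
    have := st_prefix_succ l (M - 1) hi
    rwa [show M - 1 + 1 = M by omega] at this
  have hnil : push (inv' l[M-1]) (st (prodv (l.take (M-1)))) = [] := by
    rw [← hstep, hM1, st_one]
  have hs : st (prodv (l.take (M-1))) = [inv' (inv' l[M-1])] := push_eq_nil hnil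
  have hlast := key (M - 1) (by omega) le_rfl
  rw [hs] at hlast
  simp only [List.getLast?_singleton, Option.some.injEq, inv'_inv'] at hlast
  rw [hlast]

end FGAux
namespace FGAux

def AvoidC (l : List S) : Prop :=
  ∀ m, 0 < m → m ≤ l.length → ¬ ∃ j : ℤ,
    prodv (l.take m) = (FreeGroup.of (1 : Fin 2))⁻¹ * FreeGroup.of (0 : Fin 2) ^ j

def AvoidV (x : S) (l : List S) : Prop :=
  ∀ m, 0 < m → m ≤ l.length → prodv (l.take m) ≠ (freeLetterVal x)⁻¹

lemma avoidC_iff_avoidV (l : List S) : AvoidC l ↔ AvoidV ((1 : Fin 2), true) l := by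
  constructor
  · intro h m h0 hm heq
    refine h m h0 hm ⟨0, ?_⟩
    rw [heq]
    simp [freeLetterVal]
  · intro h m h0 hm ⟨j, hj⟩
    obtain ⟨L, _, hst⟩ := st_coset j
    have hlast : (st (prodv (l.take m))).getLast? = some ((1 : Fin 2), true) := by
      rw [hj, hst]; exact List.getLast?_concat
    obtain ⟨t, htm, hstt⟩ := hit l ((1 : Fin 2), true) m hm hlast
    have ht0 : 0 < t := by
      rcases Nat.eq_zero_or_pos t with h0' | h0'
      · subst h0'; simp at hstt
      · exact h0'
    have : prodv (l.take t) = (freeLetterVal ((1 : Fin 2), true))⁻¹ :=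
      st_injective (by rw [hstt, st_val_inv])
    exact h t ht0 (le_trans htm hm) this

lemma x_mul_avoid_coset {x : S} (hx : x ≠ ((1 : Fin 2), false)) {u : List S}
    (hau : AvoidV x u) :
    ∀ t, t ≤ u.length → ¬ ∃ j : ℤ,
      freeLetterVal x * prodv (u.take t)
        = (FreeGroup.of (1 : Fin 2))⁻¹ * FreeGroup.of (0 : Fin 2) ^ j := by
  intro t ht ⟨j, hj⟩
  have hj' : prodv (u.take t)
      = (freeLetterVal x)⁻¹ * ((FreeGroup.of (1 : Fin 2))⁻¹ * FreeGroup.of (0 : Fin 2) ^ j) := by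
    rw [← hj]; group
  obtain ⟨L, _, hst⟩ := st_xcoset x hx j
  have hlast : (st (prodv (u.take t))).getLast? = some x := by
    rw [hj', hst, show L ++ [((1 : Fin 2), true), x] = (L ++ [((1 : Fin 2), true)]) ++ [x] by simp]
    exact List.getLast?_concat
  obtain ⟨s, hsm, hsts⟩ := hit u x t ht hlast
  have hs0 : 0 < s := by
    rcases Nat.eq_zero_or_pos s with h0' | h0'
    · subst h0'; simp at hsts
    · exact h0'
  have : prodv (u.take s) = (freeLetterVal x)⁻¹ :=
    st_injective (by rw [hsts, st_val_inv])
  exact hau s hs0 (le_trans hsm ht) this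

/-! ### Word sets -/

def WordsC (n : ℕ) : Type := {l : List S // l.length = n ∧ prodv l = 1 ∧ AvoidC l}

def WordsV (x : S) (n : ℕ) : Type := {l : List S // l.length = n ∧ prodv l = 1 ∧ AvoidV x l}

def wordsCV (n : ℕ) : WordsC n ≃ WordsV ((1 : Fin 2), true) n :=
  Equiv.subtypeEquivRight fun l => by
    rw [and_congr_right_iff, and_congr_right_iff]
    intro _ _
    exact avoidC_iff_avoidV l

/-- transport along a letter bijection compatible with an injective endomorphism -/
lemma prodv_map (φ : S → S) (σ : FreeGroup (Fin 2) →* FreeGroup (Fin 2))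
    (hσ : ∀ s, σ (freeLetterVal s) = freeLetterVal (φ s)) (l : List S) :
    prodv (l.map φ) = σ (prodv l) := by
  unfold prodv
  rw [map_list_prod]
  congr 1
  simp only [List.map_map]
  exact List.map_congr_left fun s _ => (hσ s).symm

def wordsVmap (φ : S ≃ S) (σ : FreeGroup (Fin 2) →* FreeGroup (Fin 2))
    (hσ : ∀ s, σ (freeLetterVal s) = freeLetterVal (φ s)) (hinj : Function.Injective σ)
    (x : S) (n : ℕ) : WordsV x n ≃ WordsV (φ x) n :=
  Equiv.subtypeEquiv (Equiv.listEquivOfEquiv φ) (by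
    intro l
    have hlen : (Equiv.listEquivOfEquiv φ l).length = l.length := by
      simp [Equiv.listEquivOfEquiv]
    have hmap : (Equiv.listEquivOfEquiv φ) l = l.map φ := rfl
    constructor
    · rintro ⟨h1, h2, h3⟩
      refine ⟨by rw [hlen, h1], ?_, ?_⟩
      · rw [hmap, prodv_map φ σ hσ, h2, map_one]
      · intro m h0 hm
        rw [hmap, ← List.map_take, prodv_map φ σ hσ]
        have : (freeLetterVal (φ x))⁻¹ = σ ((freeLetterVal x)⁻¹) := by
          rw [map_inv, hσ]
        rw [this]
        intro hcon
        exact h3 m h0 (by rw [hmap] at hm; simpa [hlen] using hm) (hinj hcon)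
    · rintro ⟨h1, h2, h3⟩
      rw [hmap] at h1 h2 h3
      refine ⟨by rw [← h1]; simp, ?_, ?_⟩
      · rw [prodv_map φ σ hσ] at h2
        refine hinj ?_
        rw [h2, map_one]
      · intro m h0 hm heq
        refine h3 m h0 (by simpa using hm) ?_
        rw [← List.map_take, prodv_map φ σ hσ, heq, map_inv, hσ])

/-- the index-swap endomorphism -/
def sigSwap : FreeGroup (Fin 2) →* FreeGroup (Fin 2) :=
  FreeGroup.lift fun i => FreeGroup.of (i + 1)

def phiSwap : S ≃ S where
  toFun s := (s.1 + 1, s.2)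
  invFun s := (s.1 + 1, s.2)
  left_inv s := by obtain ⟨i, b⟩ := s; simp; fin_cases i <;> decide
  right_inv s := by obtain ⟨i, b⟩ := s; simp; fin_cases i <;> decide

lemma sigSwap_val (s : S) : sigSwap (freeLetterVal s) = freeLetterVal (phiSwap s) := by
  obtain ⟨i, b⟩ := s
  cases b <;> simp [freeLetterVal, phiSwap, sigSwap, map_inv, FreeGroup.lift_apply_of]

lemma sigSwap_inj : Function.Injective sigSwap := by
  have hcomp : sigSwap.comp sigSwap = MonoidHom.id _ := by
    apply FreeGroup.ext_hom
    intro i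
    simp only [MonoidHom.comp_apply, MonoidHom.id_apply, sigSwap, FreeGroup.lift_apply_of]
    congr 1
    fin_cases i <;> decide
  intro a b h
  have := congrArg sigSwap h
  have ha := congrFun (congrArg DFunLike.coe hcomp) a
  have hb := congrFun (congrArg DFunLike.coe hcomp) b
  simp only [MonoidHom.comp_apply, MonoidHom.id_apply] at ha hb
  rw [← ha, ← hb]; exact this

/-- the inversion endomorphism -/
def sigInv : FreeGroup (Fin 2) →* FreeGroup (Fin 2) :=
  FreeGroup.lift fun i => (FreeGroup.of i)⁻¹

def phiInv : S ≃ S where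
  toFun s := (s.1, !s.2)
  invFun s := (s.1, !s.2)
  left_inv s := by simp
  right_inv s := by simp

lemma sigInv_val (s : S) : sigInv (freeLetterVal s) = freeLetterVal (phiInv s) := by
  obtain ⟨i, b⟩ := s
  cases b <;> simp [freeLetterVal, phiInv, sigInv, map_inv, FreeGroup.lift_apply_of]

lemma sigInv_inj : Function.Injective sigInv := by
  have hcomp : sigInv.comp sigInv = MonoidHom.id _ := by
    apply FreeGroup.ext_hom
    intro i
    simp [sigInv, FreeGroup.lift_apply_of]
  intro a b h
  have := congrArg sigInv h
  have ha := congrFun (congrArg DFunLike.coe hcomp) a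
  have hb := congrFun (congrArg DFunLike.coe hcomp) b
  simp only [MonoidHom.comp_apply, MonoidHom.id_apply] at ha hb
  rw [← ha, ← hb]; exact this

lemma card_wordsV_eq (x : S) (hx : x ≠ ((1 : Fin 2), false)) (n : ℕ) :
    Nat.card (WordsV x n) = Nat.card (WordsV ((1 : Fin 2), true) n) := by
  have hswap : ∀ y n, Nat.card (WordsV y n) = Nat.card (WordsV (phiSwap y) n) :=
    fun y n => Nat.card_congr (wordsVmap phiSwap sigSwap sigSwap_val sigSwap_inj y n)
  have hflip : ∀ y n, Nat.card (WordsV y n) = Nat.card (WordsV (phiInv y) n) :=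
    fun y n => Nat.card_congr (wordsVmap phiInv sigInv sigInv_val sigInv_inj y n)
  have hcases : ∀ y : S, y ≠ ((1 : Fin 2), false) →
      y = ((0 : Fin 2), false) ∨ y = ((0 : Fin 2), true) ∨ y = ((1 : Fin 2), true) := by decide
  rcases hcases x hx with h | h | h <;> subst h
  · rw [hflip ((0 : Fin 2), false) n]
    have h1 : phiInv ((0 : Fin 2), false) = ((0 : Fin 2), true) := rfl
    rw [h1, hswap ((0 : Fin 2), true) n]
    rfl
  · rw [hswap ((0 : Fin 2), true) n]
    rfl
  · rfl

end FGAux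
namespace FGAux

def glue (x : S) (u v : List S) : List S := x :: (u ++ inv' x :: v)

lemma glue_length (x : S) (u v : List S) :
    (glue x u v).length = u.length + v.length + 2 := by
  simp [glue]; omega

lemma glue_take_low (x : S) (u v : List S) (m : ℕ) (h0 : 0 < m) (hm : m ≤ u.length + 1) :
    (glue x u v).take m = x :: u.take (m - 1) := by
  obtain ⟨m', rfl⟩ : ∃ m', m = m' + 1 := ⟨m - 1, by omega⟩
  simp only [glue, List.take_succ_cons, Nat.add_sub_cancel]
  rw [List.take_append_of_le_length (by omega)]

lemma glue_take_high (x : S) (u v : List S) (t : ℕ) :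
    (glue x u v).take (u.length + 2 + t) = x :: (u ++ inv' x :: v.take t) := by
  simp only [glue]
  rw [show u.length + 2 + t = (u.length + (1 + t)) + 1 by omega]
  rw [List.take_succ_cons]
  rw [List.take_append]
  congr 2
  rw [show 1 + t = t + 1 by omega]
  exact List.take_of_length_le (by omega)
  rw [show u.length + (1 + t) - u.length = t + 1 by omega]; rfl

lemma prodv_glue_take_low (x : S) (u v : List S) (m : ℕ) (h0 : 0 < m) (hm : m ≤ u.length + 1) :
    prodv ((glue x u v).take m) = freeLetterVal x * prodv (u.take (m - 1)) := by
  rw [glue_take_low x u v m h0 hm, prodv_cons]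

lemma prodv_glue_take_high (x : S) (u v : List S) (hu : prodv u = 1) (t : ℕ) :
    prodv ((glue x u v).take (u.length + 2 + t)) = prodv (v.take t) := by
  rw [glue_take_high, prodv_cons, prodv_append, hu, prodv_cons, val_inv']
  group

lemma prodv_glue (x : S) (u v : List S) (hu : prodv u = 1) :
    prodv (glue x u v) = prodv v := by
  have := prodv_glue_take_high x u v hu v.length
  rwa [List.take_length, show u.length + 2 + v.length = (glue x u v).length by
    rw [glue_length]; omega, List.take_length] at this

lemma glue_avoidC {x : S} (hx : x ≠ ((1 : Fin 2), false)) {u v : List S}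
    (hu : prodv u = 1) (hau : AvoidV x u) (hav : AvoidC v) :
    AvoidC (glue x u v) := by
  intro m h0 hm
  rw [glue_length] at hm
  rcases le_or_gt m (u.length + 1) with h | h
  · rw [prodv_glue_take_low x u v m h0 h]
    exact x_mul_avoid_coset hx hau (m - 1) (by omega)
  · obtain ⟨t, rfl⟩ : ∃ t, m = u.length + 2 + t := ⟨m - (u.length + 2), by omega⟩
    rw [prodv_glue_take_high x u v hu t]
    rcases Nat.eq_zero_or_pos t with rfl | ht
    · simp only [List.take_zero, prodv_nil]
      rintro ⟨j, hj⟩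
      exact one_ne_coset j hj
    · exact hav t ht (by omega)

lemma glue_no_early_return {x : S} {u v : List S} (hau : AvoidV x u) :
    ∀ t, 0 < t → t < u.length + 2 → prodv ((glue x u v).take t) ≠ 1 := by
  intro t h0 ht heq
  rw [prodv_glue_take_low x u v t h0 (by omega)] at heq
  rcases Nat.eq_or_lt_of_le (show 1 ≤ t by omega) with h1 | h1
  · rw [← h1] at heq
    simp only [Nat.sub_self, List.take_zero, prodv_nil, mul_one] at heq
    exact letter_ne_one x heq
  · exact hau (t - 1) (by omega) (by omega) (inv_eq_of_mul_eq_one_right heq).symm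

lemma glue_return (x : S) (u v : List S) (hu : prodv u = 1) :
    prodv ((glue x u v).take (u.length + 2)) = 1 := by
  have := prodv_glue_take_high x u v hu 0
  simpa using this

/-- the first return time of a glued word is `u.length + 2` -/
lemma glue_isLeast {x : S} {u v : List S} (hu : prodv u = 1) (hau : AvoidV x u) :
    IsLeast {t | 0 < t ∧ prodv ((glue x u v).take t) = 1} (u.length + 2) := by
  constructor
  · exact ⟨by omega, glue_return x u v hu⟩
  · intro t ⟨h0, ht⟩
    by_contra h
    exact glue_no_early_return hau t h0 (by omega) ht

lemma decompose (l : List S) (h0 : 0 < l.length) (hc : prodv l = 1) (ha : AvoidC l) :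
    ∃ x u v, x ≠ ((1 : Fin 2), false) ∧ prodv u = 1 ∧ AvoidV x u ∧
      prodv v = 1 ∧ AvoidC v ∧ l = glue x u v := by
  classical
  have hex : ∃ t, 0 < t ∧ prodv (l.take t) = 1 :=
    ⟨l.length, h0, by rw [List.take_length]; exact hc⟩
  obtain ⟨M, hM0, hMret, hMmin, hMle⟩ :
      ∃ M, 0 < M ∧ prodv (l.take M) = 1 ∧
        (∀ t, 0 < t → t < M → prodv (l.take t) ≠ 1) ∧ M ≤ l.length :=
    ⟨Nat.find hex, (Nat.find_spec hex).1, (Nat.find_spec hex).2,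
      fun t ht0 htM heq => Nat.find_min hex htM ⟨ht0, heq⟩,
      Nat.find_le ⟨h0, by rw [List.take_length]; exact hc⟩⟩
  obtain ⟨hM2, hlast⟩ := firstReturn_struct l M hMle hM0 hMmin hMret
  have hi : M - 1 < l.length := by omega
  have hlast' := hlast hi h0
  set x := l[0]'h0 with hxdef
  set u := (l.take (M - 1)).drop 1 with hudef
  set v := l.drop M with hvdef
  have hulen : u.length = M - 2 := by
    rw [hudef, List.length_drop, List.length_take]
    omega
  -- the glue identity
  have hglue : l = glue x u v := by
    have h1 : l = l.take (M - 1) ++ l.drop (M - 1) := (List.take_append_drop _ _).symm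
    have h2 : l.drop (M - 1) = l[M - 1] :: l.drop M := by
      rw [List.drop_eq_getElem_cons hi, show M - 1 + 1 = M by omega]
    have h3 : l.take (M - 1) = x :: u := by
      rw [hudef]
      have hne : l.take (M - 1) ≠ [] := by
        intro hnil
        have := congrArg List.length hnil
        rw [List.length_take, List.length_nil] at this
        omega
      have : l.take (M - 1) = (l.take (M - 1))[0]'(by
          rw [List.length_take]; omega) :: (l.take (M - 1)).drop 1 := by
        rw [← List.drop_eq_getElem_cons]
        simp
      rw [this]
      congr 1
      rw [List.getElem_take]
    have h4 : l = (x :: u) ++ (inv' x :: v) := by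
      rw [← hlast', ← h2, ← h3]
      exact h1
    rw [h4]
    simp [glue]
  -- closedness of u
  have hMu : M = u.length + 2 := by omega
  have hret2 : prodv ((glue x u v).take (u.length + 2)) = 1 := by
    rw [← hglue, ← hMu]; exact hMret
  have hhigh : (glue x u v).take (u.length + 2) = x :: (u ++ [inv' x]) := by
    have := glue_take_high x u v 0
    simpa using this
  have hu1 : prodv u = 1 := by
    rw [hhigh, prodv_cons, prodv_append] at hret2
    simp only [prodv_cons, prodv_nil, mul_one, val_inv'] at hret2
    have := mul_left_cancel (a := freeLetterVal x) (b := prodv u * (freeLetterVal x)⁻¹)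
      (c := (freeLetterVal x)⁻¹ * 1) (by rw [hret2]; group)
    calc prodv u = prodv u * (freeLetterVal x)⁻¹ * freeLetterVal x := by group
    _ = (freeLetterVal x)⁻¹ * 1 * freeLetterVal x := by rw [this]
    _ = 1 := by group
  -- AvoidV x u
  have hau : AvoidV x u := by
    intro t ht0 htu heq
    have hlow : prodv ((glue x u v).take (t + 1)) = freeLetterVal x * prodv (u.take t) := by
      have := prodv_glue_take_low x u v (t + 1) (by omega) (by omega)
      simpa using this
    rw [heq] at hlow
    simp only [mul_inv_cancel] at hlow
    exact hMmin (t + 1) (by omega) (by omega) (by rw [hglue]; exact hlow)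
  -- x ≠ (1, false)
  have hx : x ≠ ((1 : Fin 2), false) := by
    intro hxeq
    refine ha 1 (by omega) (by omega) ⟨0, ?_⟩
    have h1 : l.take 1 = [x] := by
      rw [hglue, glue_take_low x u v 1 (by omega) (by omega)]
      simp
    rw [h1]
    simp only [prodv_cons, prodv_nil, mul_one, hxeq]
    simp [freeLetterVal]
  -- closedness of v
  have hv1 : prodv v = 1 := by
    have := prodv_glue x u v hu1
    rw [← hglue, hc] at this
    exact this.symm
  -- AvoidC v
  have hav : AvoidC v := by
    intro t ht0 htv
    have heq : prodv (v.take t) = prodv (l.take (u.length + 2 + t)) := by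
      rw [hglue, prodv_glue_take_high x u v hu1 t]
    rw [heq]
    refine ha (u.length + 2 + t) (by omega) ?_
    have : l.length = u.length + v.length + 2 := by rw [hglue, glue_length]
    omega
  exact ⟨x, u, v, hx, hu1, hau, hv1, hav, hglue⟩

end FGAux
namespace FGAux

lemma finite_words (n : ℕ) (P : List S → Prop) :
    Finite {l : List S // l.length = n ∧ P l} := by
  apply Finite.of_injective
    (fun l : {l : List S // l.length = n ∧ P l} =>
      (fun i : Fin n => l.1[(i : ℕ)]'(by rw [l.2.1]; exact i.2)))
  intro l1 l2 h
  apply Subtype.ext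
  apply List.ext_getElem (by rw [l1.2.1, l2.2.1])
  intro i h1 h2
  have := congrFun h ⟨i, by rw [← l1.2.1]; exact h1⟩
  simpa using this

instance (n : ℕ) : Finite (WordsC n) := finite_words n _
instance (x : S) (n : ℕ) : Finite (WordsV x n) := finite_words n _

lemma nat_card_sigma {ι : Type*} [Fintype ι] (f : ι → Type*) [∀ i, Finite (f i)] :
    Nat.card (Σ i, f i) = ∑ i, Nat.card (f i) := by
  letI : ∀ i, Fintype (f i) := fun i => Fintype.ofFinite _
  simp [Nat.card_eq_fintype_card, Fintype.card_sigma]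

def X3 : Type := {s : S // s ≠ ((1 : Fin 2), false)}

instance : Fintype X3 := by unfold X3; infer_instance

lemma card_X3 : Fintype.card X3 = 3 := by
  simp [X3, Fintype.card_subtype_compl]; decide

def glueMap (n : ℕ) :
    (Σ _x : X3, Σ k : Fin (n - 1), WordsV _x.1 k × WordsC (n - 2 - k)) → WordsC n :=
  fun t =>
    ⟨glue t.1.1 t.2.2.1.1 t.2.2.2.1, by
      obtain ⟨⟨x, hx⟩, ⟨k, hk⟩, ⟨u, hul, hu1, hau⟩, ⟨v, hvl, hv1, hav⟩⟩ := t
      dsimp only at hul hvl hau ⊢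
      refine ⟨?_, ?_, ?_⟩
      · rw [glue_length, hul, hvl]
        omega
      · rw [prodv_glue _ _ _ hu1]
        exact hv1
      · exact glue_avoidC hx hu1 hau hav⟩

lemma glueMap_bijective (n : ℕ) (hn : 1 ≤ n) : Function.Bijective (glueMap n) := by
  constructor
  · rintro ⟨⟨x1, hx1⟩, ⟨k1, hk1⟩, ⟨u1, hul1, hu11, hau1⟩, ⟨v1, hvl1, hv11, hav1⟩⟩
      ⟨⟨x2, hx2⟩, ⟨k2, hk2⟩, ⟨u2, hul2, hu12, hau2⟩, ⟨v2, hvl2, hv12, hav2⟩⟩ heq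
    have hgl : glue x1 u1 v1 = glue x2 u2 v2 := congrArg Subtype.val heq
    have e1 : IsLeast {t | 0 < t ∧ prodv ((glue x1 u1 v1).take t) = 1} (u1.length + 2) :=
      glue_isLeast hu11 hau1
    have e2 : IsLeast {t | 0 < t ∧ prodv ((glue x1 u1 v1).take t) = 1} (u2.length + 2) := by
      rw [hgl]; exact glue_isLeast hu12 hau2
    have hlen : u1.length = u2.length := by
      have := e1.unique e2; omega
    simp only [glue, List.cons.injEq] at hgl
    obtain ⟨hx, happ⟩ := hgl
    obtain ⟨hu, hcons⟩ := List.append_inj happ hlen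
    have hv : v1 = v2 := by injection hcons
    have hk : k1 = k2 := by
      have h1 : u1.length = k1 := hul1
      have h2 : u2.length = k2 := hul2
      omega
    subst hx hu hv hk
    rfl
  · rintro ⟨l, hlen, hcl, hal⟩
    obtain ⟨x, u, v, hx, hu1, hau, hv1, hav, hglue⟩ :=
      decompose l (by omega) hcl hal
    have hlen2 : l.length = u.length + v.length + 2 := by rw [hglue, glue_length]
    refine ⟨⟨⟨x, hx⟩, ⟨u.length, by omega⟩,
      (⟨u, rfl, hu1, hau⟩, ⟨v, by show v.length = n - 2 - u.length; omega, hv1, hav⟩)⟩, ?_⟩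
    exact Subtype.ext hglue.symm

lemma card_wordsC_eq_wordsV (n : ℕ) :
    Nat.card (WordsC n) = Nat.card (WordsV ((1 : Fin 2), true) n) :=
  Nat.card_congr (wordsCV n)

lemma card_rec (n : ℕ) (hn : 1 ≤ n) :
    Nat.card (WordsC n)
      = 3 * ∑ k ∈ Finset.range (n - 1), Nat.card (WordsC k) * Nat.card (WordsC (n - 2 - k)) := by
  have h1 := (Nat.card_eq_of_bijective _ (glueMap_bijective n hn)).symm
  rw [h1, nat_card_sigma]
  have h2 : ∀ x : X3, Nat.card (Σ k : Fin (n - 1), WordsV x.1 k × WordsC (n - 2 - k))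
      = ∑ k ∈ Finset.range (n - 1), Nat.card (WordsC k) * Nat.card (WordsC (n - 2 - k)) := by
    intro x
    rw [nat_card_sigma]
    rw [← Fin.sum_univ_eq_sum_range (fun k => Nat.card (WordsC k) * Nat.card (WordsC (n - 2 - k)))]
    congr 1
    funext k
    rw [Nat.card_prod, card_wordsV_eq x.1 x.2, ← card_wordsC_eq_wordsV]
  rw [Finset.sum_congr rfl (fun x _ => h2 x), Finset.sum_const, Finset.card_univ, card_X3]
  simp [mul_comm]

/-! ### bridge to `pCount` -/

lemma ofFn_getElem_eq (n : ℕ) (l : List S) (h : l.length = n) :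
    List.ofFn (fun i : Fin n => l[(i : ℕ)]'(by rw [h]; exact i.2)) = l := by
  apply List.ext_getElem (by simp [h])
  intro i h1 h2
  simp

def listTupleEquiv (n : ℕ) (P : List S → Prop) :
    {w : Fin n → S // P (List.ofFn w)} ≃ {l : List S // l.length = n ∧ P l} where
  toFun w := ⟨List.ofFn w.1, List.length_ofFn, w.2⟩
  invFun l := ⟨fun i : Fin n => l.1[(i : ℕ)]'(by rw [l.2.1]; exact i.2), by
    rw [ofFn_getElem_eq n l.1 l.2.1]; exact l.2.2⟩
  left_inv w := by
    apply Subtype.ext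
    funext i
    simp
  right_inv l := Subtype.ext (ofFn_getElem_eq n l.1 l.2.1)

lemma pCount_eq_card (n : ℕ) : pCount n = Nat.card (WordsC n) := by
  unfold pCount WordsC
  apply Nat.card_congr
  have e1 : {w : Fin n → S //
      ((List.ofFn w).map freeLetterVal).prod = 1 ∧
      ∀ m, 0 < m → m ≤ n → ¬ ∃ j : ℤ,
        (((List.ofFn w).take m).map freeLetterVal).prod =
          (FreeGroup.of (1 : Fin 2))⁻¹ * FreeGroup.of (0 : Fin 2) ^ j}
      ≃ {w : Fin n → S // prodv (List.ofFn w) = 1 ∧ AvoidC (List.ofFn w)} := by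
    apply Equiv.subtypeEquivRight
    intro w
    unfold prodv AvoidC
    rw [List.length_ofFn]
    exact Iff.rfl
  exact e1.trans (listTupleEquiv n fun l => prodv l = 1 ∧ AvoidC l)

lemma pCount_zero : pCount 0 = 1 := by
  rw [pCount_eq_card]
  haveI : Unique (WordsC 0) := by
    refine ⟨⟨⟨[], rfl, rfl, fun m h0 hm => by simp at hm; omega⟩⟩, ?_⟩
    rintro ⟨l, hl, _, _⟩
    apply Subtype.ext
    simpa using List.length_eq_zero_iff.mp hl
  exact Nat.card_unique

lemma pCount_rec (n : ℕ) (hn : 1 ≤ n) :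
    pCount n = 3 * ∑ k ∈ Finset.range (n - 1), pCount k * pCount (n - 2 - k) := by
  rw [pCount_eq_card, card_rec n hn]
  congr 1
  apply Finset.sum_congr rfl
  intro k _
  rw [pCount_eq_card, pCount_eq_card]

end FGAux

open PowerSeries in
/-- The generating function `P(z) = Σ p_n z^n` satisfies `3z²·P² − P + 1 = 0`. -/
theorem freeGroup_L_words_quadratic :
    3 * X ^ 2 * (PowerSeries.mk fun n => (pCount n : ℚ)) ^ 2
      - (PowerSeries.mk fun n => (pCount n : ℚ)) + 1 = 0 := by
  set P : PowerSeries ℚ := PowerSeries.mk fun n => (pCount n : ℚ) with hP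
  have h3 : (3 : PowerSeries ℚ) * X ^ 2 * P ^ 2 = PowerSeries.C (3 : ℚ) * (P ^ 2 * X ^ 2) := by
    rw [(map_ofNat (PowerSeries.C (R := ℚ)) 3).symm]; ring
  have hp1 : pCount 1 = 0 := by
    rw [FGAux.pCount_rec 1 le_rfl]; simp
  ext n
  rw [map_add, map_sub, h3, PowerSeries.coeff_C_mul, PowerSeries.coeff_mul_X_pow',
    PowerSeries.coeff_one, map_zero, hP, PowerSeries.coeff_mk]
  match n with
  | 0 => simp [FGAux.pCount_zero]
  | 1 => simp [hp1]
  | (m + 2) =>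
      have harith1 : m + 2 - 2 = m := rfl
      rw [harith1]
      have hcoeff : (PowerSeries.coeff m) ((PowerSeries.mk fun n => (pCount n : ℚ)) ^ 2)
          = ∑ k ∈ Finset.range (m + 1), (pCount k : ℚ) * (pCount (m - k) : ℚ) := by
        rw [sq, PowerSeries.coeff_mul]
        rw [Finset.Nat.sum_antidiagonal_eq_sum_range_succ_mk
          (fun ij => (PowerSeries.coeff ij.1) (PowerSeries.mk fun n => (pCount n : ℚ)) *
            (PowerSeries.coeff ij.2) (PowerSeries.mk fun n => (pCount n : ℚ))) m]
        simp [PowerSeries.coeff_mk]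
      have hrec : (pCount (m + 2) : ℚ)
          = 3 * ∑ k ∈ Finset.range (m + 1), (pCount k : ℚ) * (pCount (m - k) : ℚ) := by
        have := FGAux.pCount_rec (m + 2) (by omega)
        have h2 : pCount (m + 2) = 3 * ∑ k ∈ Finset.range (m + 1), pCount k * pCount (m - k) :=
          this
        rw [h2]
        push_cast
        ring
      rw [if_pos (by omega : 2 ≤ m + 2), hcoeff, ← hrec]
      simp

end
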